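/- For every natural number n, N_n ≠ 0; equivalently, every Fibonacci symbol element of the symbol algebra (1,1 / ℚ(ω), ω) of degree 3 is invertible, since an element of this algebra is invertible exactly when its reduced norm is nonzero. -/
import Mathlib


/-- Fibonacci numbers as complex numbers. -/
noncomputable def f (n : ℕ) : ℂ := (Nat.fib n : ℂ)

/-- The reduced norm of the `n`-th Fibonacci symbol element of the symbol algebra
`(1,1 / ℚ(ω), ω)`, where `c00 = f n, c10 = f (n+1), c20 = f (n+2), c01 = f (n+3),
c11 = f (n+4), c21 = f (n+5), c02 = f (n+6), c12 = f (n+7), c22 = f (n+8)`. -/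
noncomputable def fibSymbolNorm (ω : ℂ) (n : ℕ) : ℂ :=
  (f (n + 2) ^ 3 + f (n + 5) ^ 3 + f (n + 8) ^ 3 - 3 * f (n + 2) * f (n + 5) * f (n + 8)) +
    (f (n + 1) ^ 3 + f (n + 4) ^ 3 + f (n + 7) ^ 3 - 3 * f (n + 1) * f (n + 4) * f (n + 7)) -
    3 * (f n * f (n + 1) * f (n + 2) + f (n + 3) * f (n + 4) * f (n + 5) +
      f (n + 6) * f (n + 7) * f (n + 8)) -
    3 * ω * (f n * f (n + 7) * f (n + 5) + f (n + 3) * f (n + 1) * f (n + 8) +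
      f (n + 6) * f (n + 4) * f (n + 2)) -
    3 * ω ^ 2 * (f n * f (n + 4) * f (n + 8) + f (n + 6) * f (n + 1) * f (n + 5) +
      f (n + 3) * f (n + 7) * f (n + 2)) +
    (f n ^ 3 + f (n + 3) ^ 3 + f (n + 6) ^ 3 - 3 * f n * f (n + 3) * f (n + 6))

theorem stmt19 (ω : ℂ) (hω : ω ≠ 1) (hω3 : ω ^ 3 = 1) (n : ℕ) :
    fibSymbolNorm ω n ≠ 0 := by
  have hsum : ω ^ 2 + ω + 1 = 0 := by
    have h : (ω - 1) * (ω ^ 2 + ω + 1) = 0 := by linear_combination hω3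
    rcases mul_eq_zero.mp h with h' | h'
    · exact absurd (sub_eq_zero.mp h') hω
    · exact h'
  have e : ∀ m : ℕ, f (m + 2) = f (m + 1) + f m := by
    intro m; simp [f, Nat.fib_add_two]; ring
  have e2 : f (n + 2) = f (n + 1) + f n := e n
  have e3 : f (n + 3) = f (n + 2) + f (n + 1) := e (n + 1)
  have e4 : f (n + 4) = f (n + 3) + f (n + 2) := e (n + 2)
  have e5 : f (n + 5) = f (n + 4) + f (n + 3) := e (n + 3)
  have e6 : f (n + 6) = f (n + 5) + f (n + 4) := e (n + 4)
  have e7 : f (n + 7) = f (n + 6) + f (n + 5) := e (n + 5)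
  have e8 : f (n + 8) = f (n + 7) + f (n + 6) := e (n + 6)
  set a := f n with ha
  set b := f (n + 1) with hb
  have key : fibSymbolNorm ω n =
      1264 * a ^ 3 + 6072 * a ^ 2 * b + 9768 * a * b ^ 2 + 5256 * b ^ 3 := by
    rw [fibSymbolNorm, e8, e7, e6, e5, e4, e3, e2]
    linear_combination (-102 * a ^ 3 - 399 * a ^ 2 * b - 501 * a * b ^ 2 - 198 * b ^ 3) * hsum
  rw [key]
  have hkey : (1264 * a ^ 3 + 6072 * a ^ 2 * b + 9768 * a * b ^ 2 + 5256 * b ^ 3 : ℂ) =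
      ((1264 * Nat.fib n ^ 3 + 6072 * Nat.fib n ^ 2 * Nat.fib (n + 1) +
        9768 * Nat.fib n * Nat.fib (n + 1) ^ 2 + 5256 * Nat.fib (n + 1) ^ 3 : ℕ) : ℂ) := by
    simp only [ha, hb, f]; push_cast; ring
  rw [hkey]
  rw [Nat.cast_ne_zero]
  have := Nat.fib_pos.mpr (Nat.succ_pos n)
  positivity
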